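/- Let A be a nonempty subset of Z/pZ with p prime. Then |A ∔ A| ≥ min{p, 2|A|-3}, where A ∔ A = {a+a' mod p : a, a' ∈ A, a ≠ a'} (Dias da Silva–Hamidoune theorem). -/

import Mathlib

open Polynomial Finset

variable {F : Type*} [Field F] [DecidableEq F]

lemma sum_pow_mul_weight (A : Finset F) (i : ℕ) (hi : i < A.card) :
    ∑ a ∈ A, a ^ i * ∏ b ∈ A.erase a, (a - b)⁻¹ =
      if i = A.card - 1 then 1 else 0 := by
  have hinj : Set.InjOn (id : F → F) A := Function.injective_id.injOn
  have hX : (X ^ i : F[X]) = Lagrange.interpolate A id (fun a => (X ^ i : F[X]).eval (id a)) := by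
    apply Lagrange.eq_interpolate hinj
    simpa [degree_X_pow] using (Nat.cast_lt (α := WithBot ℕ)).mpr hi
  have h2 := congrArg (fun q : F[X] => q.coeff (A.card - 1)) hX
  simp only [coeff_X_pow] at h2
  rw [Lagrange.interpolate_apply, finset_sum_coeff] at h2
  have h3 : ∀ a ∈ A, (Polynomial.C ((X ^ i : F[X]).eval (id a)) * Lagrange.basis A id a).coeff (A.card - 1)
      = a ^ i * ∏ b ∈ A.erase a, (a - b)⁻¹ := by
    intro a ha
    rw [coeff_C_mul, Lagrange.basis_eq_prod_sub_inv_mul_nodal_div ha,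
      ← Lagrange.nodal_erase_eq_nodal_div ha, coeff_C_mul]
    have hmonic : (Lagrange.nodal (A.erase a) id).Monic := Lagrange.nodal_monic
    have hdeg : (Lagrange.nodal (A.erase a) id).natDegree = A.card - 1 := by
      rw [Lagrange.natDegree_nodal, card_erase_of_mem ha]
    rw [← hdeg, hmonic.coeff_natDegree]
    simp [Lagrange.nodalWeight, mul_comm]
  rw [Finset.sum_congr rfl h3] at h2
  rw [← h2]
  by_cases h : i = A.card - 1 <;> simp [h, eq_comm]

set_option linter.unusedSectionVars false


/-- total degree bound predicate for elements of F[X][Y] -/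
def TDB (f : Polynomial (Polynomial F)) (d : ℕ) : Prop :=
  ∀ i j, ((f.coeff j).coeff i ≠ 0) → i + j ≤ d

lemma TDB.mul {f g : Polynomial (Polynomial F)} {d e : ℕ}
    (hf : TDB f d) (hg : TDB g e) : TDB (f * g) (d + e) := by
  intro i j hne
  by_contra hgt
  apply hne
  rw [coeff_mul, finset_sum_coeff]
  apply Finset.sum_eq_zero
  intro jk hjk
  rw [coeff_mul]
  apply Finset.sum_eq_zero
  intro ik hik
  rw [Finset.HasAntidiagonal.mem_antidiagonal] at hjk hik
  by_cases h1 : (f.coeff jk.1).coeff ik.1 = 0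
  · rw [h1, zero_mul]
  by_cases h2 : (g.coeff jk.2).coeff ik.2 = 0
  · rw [h2, mul_zero]
  have := hf ik.1 jk.1 h1
  have := hg ik.2 jk.2 h2
  omega

/-- top-degree slice of f : F[X][Y], as one-variable polynomial (coeff j = coeff of x^(d-j) y^j) -/
noncomputable def sliceP (f : Polynomial (Polynomial F)) (d : ℕ) : Polynomial F :=
  ∑ j ∈ Finset.range (d + 1), Polynomial.C ((f.coeff j).coeff (d - j)) * X ^ j

lemma sliceP_coeff (f : Polynomial (Polynomial F)) (d j : ℕ) :
    (sliceP f d).coeff j = if j ≤ d then (f.coeff j).coeff (d - j) else 0 := by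
  rw [sliceP, finset_sum_coeff]
  by_cases h : j ≤ d
  · rw [Finset.sum_eq_single_of_mem j (Finset.mem_range.mpr (by omega))]
    · simp [h]
    · intro k _ hk
      simp [coeff_C_mul, coeff_X_pow, hk.symm]
  · simp only [h, if_false]
    apply Finset.sum_eq_zero
    intro k hk
    rw [Finset.mem_range] at hk
    rw [coeff_C_mul, coeff_X_pow, if_neg (by omega : ¬ j = k), mul_zero]

lemma sliceP_mul {f g : Polynomial (Polynomial F)} {d e : ℕ}
    (hf : TDB f d) (hg : TDB g e) :
    sliceP (f * g) (d + e) = sliceP f d * sliceP g e := by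
  ext j
  rw [sliceP_coeff, Polynomial.coeff_mul]
  by_cases hj : j ≤ d + e
  · rw [if_pos hj, coeff_mul, finset_sum_coeff]
    apply Finset.sum_congr rfl
    intro jk hjk
    rw [Finset.HasAntidiagonal.mem_antidiagonal] at hjk
    rw [sliceP_coeff, sliceP_coeff]
    by_cases h1 : jk.1 ≤ d
    · by_cases h2 : jk.2 ≤ e
      · rw [if_pos h1, if_pos h2, coeff_mul]
        rw [Finset.sum_eq_single_of_mem (d - jk.1, e - jk.2)
          (Finset.HasAntidiagonal.mem_antidiagonal.mpr (by omega))]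
        intro ik hik hne
        rw [Finset.HasAntidiagonal.mem_antidiagonal] at hik
        by_cases hz1 : (f.coeff jk.1).coeff ik.1 = 0
        · rw [hz1, zero_mul]
        by_cases hz2 : (g.coeff jk.2).coeff ik.2 = 0
        · rw [hz2, mul_zero]
        have := hf ik.1 jk.1 hz1
        have := hg ik.2 jk.2 hz2
        exact absurd (Prod.ext (by omega) (by omega)) hne
      · rw [if_neg h2, mul_zero, coeff_mul]
        apply Finset.sum_eq_zero
        intro ik hik
        by_cases hz2 : (g.coeff jk.2).coeff ik.2 = 0
        · rw [hz2, mul_zero]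
        have := hg ik.2 jk.2 hz2
        omega
    · rw [if_neg h1, zero_mul, coeff_mul]
      apply Finset.sum_eq_zero
      intro ik hik
      by_cases hz1 : (f.coeff jk.1).coeff ik.1 = 0
      · rw [hz1, zero_mul]
      have := hf ik.1 jk.1 hz1
      omega
  · rw [if_neg hj, Polynomial.coeff_mul]
    symm
    apply Finset.sum_eq_zero
    intro jk hjk
    rw [Finset.HasAntidiagonal.mem_antidiagonal] at hjk
    rw [sliceP_coeff, sliceP_coeff]
    by_cases h1 : jk.1 ≤ d
    · by_cases h2 : jk.2 ≤ e
      · omega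
      · simp [h2]
    · simp [h1]

lemma CN_two_var (A B : Finset F) (hA : A.Nonempty) (hB : B.Nonempty)
    (f : Polynomial (Polynomial F))
    (hdeg : TDB f ((A.card - 1) + (B.card - 1)))
    (hvan : ∀ a ∈ A, ∀ b ∈ B, Polynomial.eval b (f.map (Polynomial.evalRingHom a)) = 0) :
    (f.coeff (B.card - 1)).coeff (A.card - 1) = 0 := by
  set t1 := A.card - 1 with ht1
  set t2 := B.card - 1 with ht2
  set wA : F → F := fun a => ∏ b ∈ A.erase a, (a - b)⁻¹ with hwA
  set wB : F → F := fun b => ∏ b' ∈ B.erase b, (b - b')⁻¹ with hwB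
  set SA : ℕ → F := fun i => ∑ a ∈ A, a ^ i * wA a with hSA
  set SB : ℕ → F := fun j => ∑ b ∈ B, b ^ j * wB b with hSB
  have hSAval : ∀ i, i < A.card → SA i = if i = t1 then 1 else 0 :=
    fun i hi => sum_pow_mul_weight A i hi
  have hSBval : ∀ j, j < B.card → SB j = if j = t2 then 1 else 0 :=
    fun j hj => sum_pow_mul_weight B j hj
  -- the big sum
  have key : ∑ j ∈ f.support, ∑ i ∈ (f.coeff j).support,
      (f.coeff j).coeff i * SA i * SB j = 0 := by
    have expand : ∀ a ∈ A, ∀ b ∈ B,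
        wA a * wB b * Polynomial.eval b (f.map (Polynomial.evalRingHom a)) =
        ∑ j ∈ f.support, ∑ i ∈ (f.coeff j).support,
          (f.coeff j).coeff i * (a ^ i * wA a) * (b ^ j * wB b) := by
      intro a ha b hb
      rw [Polynomial.eval_map, Polynomial.eval₂_eq_sum, Polynomial.sum]
      rw [Finset.mul_sum]
      apply Finset.sum_congr rfl
      intro j hj
      rw [show (Polynomial.evalRingHom a) (f.coeff j) = (f.coeff j).eval a from rfl]
      rw [Polynomial.eval_eq_sum, Polynomial.sum, Finset.sum_mul, Finset.mul_sum]
      apply Finset.sum_congr rfl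
      intro i hi
      ring
    have lhs0 : ∑ a ∈ A, ∑ b ∈ B,
        wA a * wB b * Polynomial.eval b (f.map (Polynomial.evalRingHom a)) = 0 := by
      apply Finset.sum_eq_zero; intro a ha
      apply Finset.sum_eq_zero; intro b hb
      rw [hvan a ha b hb, mul_zero]
    calc ∑ j ∈ f.support, ∑ i ∈ (f.coeff j).support,
          (f.coeff j).coeff i * SA i * SB j
        = ∑ j ∈ f.support, ∑ i ∈ (f.coeff j).support, ∑ a ∈ A, ∑ b ∈ B,
          (f.coeff j).coeff i * (a ^ i * wA a) * (b ^ j * wB b) := by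
          apply Finset.sum_congr rfl; intro j hj
          apply Finset.sum_congr rfl; intro i hi
          rw [hSA, hSB]
          simp only
          rw [mul_assoc, Finset.sum_mul_sum, Finset.mul_sum]
          apply Finset.sum_congr rfl; intro a ha
          rw [Finset.mul_sum]
          apply Finset.sum_congr rfl; intro b hb
          ring
      _ = ∑ a ∈ A, ∑ b ∈ B, ∑ j ∈ f.support, ∑ i ∈ (f.coeff j).support,
          (f.coeff j).coeff i * (a ^ i * wA a) * (b ^ j * wB b) := by
          rw [Finset.sum_sigma']
          rw [Finset.sum_comm]
          apply Finset.sum_congr rfl; intro a _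
          rw [Finset.sum_comm]
          apply Finset.sum_congr rfl; intro b _
          rw [Finset.sum_sigma]
      _ = ∑ a ∈ A, ∑ b ∈ B,
          wA a * wB b * Polynomial.eval b (f.map (Polynomial.evalRingHom a)) := by
          apply Finset.sum_congr rfl; intro a ha
          apply Finset.sum_congr rfl; intro b hb
          rw [expand a ha b hb]
      _ = 0 := lhs0
  -- extract the coefficient
  by_cases hmem : (f.coeff t2).coeff t1 = 0
  · exact hmem
  have ht2mem : t2 ∈ f.support := by
    rw [Polynomial.mem_support_iff]
    intro h0
    apply hmem; rw [h0]; simp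
  have ht1mem : t1 ∈ (f.coeff t2).support := Polynomial.mem_support_iff.mpr hmem
  rw [Finset.sum_eq_single_of_mem t2 ht2mem] at key
  · rw [Finset.sum_eq_single_of_mem t1 ht1mem] at key
    · rw [hSAval t1 (by have := hA.card_pos; omega), hSBval t2 (by have := hB.card_pos; omega), if_pos rfl, if_pos rfl,
        mul_one, mul_one] at key
      exact key
    · intro i hi hne
      have hc : (f.coeff t2).coeff i ≠ 0 := Polynomial.mem_support_iff.mp hi
      have hle := hdeg i t2 hc
      rw [hSAval i (by have := hA.card_pos; omega), if_neg hne, mul_zero, zero_mul]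
  · intro j hj hne
    apply Finset.sum_eq_zero
    intro i hi
    have hc : (f.coeff j).coeff i ≠ 0 := Polynomial.mem_support_iff.mp hi
    have hle := hdeg i j hc
    have hA1 := hA.card_pos
    have hB1 := hB.card_pos
    by_cases hjlt : j < t2
    · rw [hSBval j (by omega), if_neg (by omega), mul_zero]
    · have : i < t1 := by omega
      rw [hSAval i (by omega), if_neg (by omega), mul_zero, zero_mul]




noncomputable def ehPoly (C : Finset F) : Polynomial (Polynomial F) :=
  (Polynomial.C Polynomial.X - Polynomial.X) *
    ∏ c ∈ C, (Polynomial.C Polynomial.X + Polynomial.X - Polynomial.C (Polynomial.C c))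

lemma coeff_fac1 (j : ℕ) : (Polynomial.C Polynomial.X - Polynomial.X : Polynomial (Polynomial F)).coeff j
    = if j = 0 then Polynomial.X else if j = 1 then -1 else 0 := by
  rcases j with _ | _ | j <;>
    simp [Polynomial.coeff_sub, Polynomial.coeff_C, Polynomial.coeff_X]

lemma coeff_fac2 (c : F) (j : ℕ) :
    (Polynomial.C Polynomial.X + Polynomial.X - Polynomial.C (Polynomial.C c)
      : Polynomial (Polynomial F)).coeff j
    = if j = 0 then Polynomial.X - Polynomial.C c else if j = 1 then 1 else 0 := by
  rcases j with _ | _ | j <;>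
    simp [Polynomial.coeff_sub, Polynomial.coeff_add, Polynomial.coeff_C, Polynomial.coeff_X]


lemma TDB_fac1 : TDB (Polynomial.C Polynomial.X - Polynomial.X : Polynomial (Polynomial F)) 1 := by
  intro i j h
  rw [coeff_fac1] at h
  rcases j with _ | _ | j
  · simp only [if_pos rfl, reduceIte] at h
    by_contra hc
    exact h (Polynomial.coeff_X_of_ne_one (by omega))
  · rcases i with _ | i
    · omega
    · simp only [reduceIte, if_neg (by omega : ¬ (1:ℕ) = 0)] at h
      rw [Polynomial.coeff_neg, Polynomial.coeff_one, if_neg (by omega)] at h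
      simp at h
  · simp at h

lemma TDB_fac2 (c : F) : TDB (Polynomial.C Polynomial.X + Polynomial.X
    - Polynomial.C (Polynomial.C c) : Polynomial (Polynomial F)) 1 := by
  intro i j h
  rw [coeff_fac2] at h
  rcases j with _ | _ | j
  · simp only [if_pos rfl, reduceIte] at h
    by_contra hc
    rw [Polynomial.coeff_sub, Polynomial.coeff_X, Polynomial.coeff_C,
      if_neg (by omega : ¬ 1 = i), if_neg (by omega : ¬ i = 0), sub_zero] at h
    exact h rfl
  · rcases i with _ | i
    · omega
    · simp only [reduceIte, if_neg (by omega : ¬ (1:ℕ) = 0)] at h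
      rw [Polynomial.coeff_one, if_neg (by omega)] at h
      simp at h
  · simp at h

lemma TDB_one : TDB (1 : Polynomial (Polynomial F)) 0 := by
  intro i j h
  rcases j with _ | j
  · rcases i with _ | i
    · omega
    · rw [Polynomial.coeff_one, if_pos rfl, Polynomial.coeff_one,
        if_neg (by omega)] at h
      exact absurd rfl h
  · rw [Polynomial.coeff_one, if_neg (by omega)] at h
    simp at h

lemma sliceP_fac1 : sliceP (Polynomial.C Polynomial.X - Polynomial.X
    : Polynomial (Polynomial F)) 1 = 1 - X := by
  ext n
  rw [sliceP_coeff]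
  rcases n with _ | _ | n <;>
    simp [coeff_fac1, Polynomial.coeff_one, Polynomial.coeff_X]

lemma sliceP_fac2 (c : F) : sliceP (Polynomial.C Polynomial.X + Polynomial.X
    - Polynomial.C (Polynomial.C c) : Polynomial (Polynomial F)) 1 = 1 + X := by
  ext n
  rw [sliceP_coeff]
  rcases n with _ | _ | n <;>
    simp [coeff_fac2, Polynomial.coeff_one, Polynomial.coeff_X, Polynomial.coeff_C]

lemma sliceP_one : sliceP (1 : Polynomial (Polynomial F)) 0 = 1 := by
  ext n
  rw [sliceP_coeff]
  rcases n with _ | n <;> simp [Polynomial.coeff_one]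

lemma TDB_prod (C : Finset F) : TDB (∏ c ∈ C, (Polynomial.C Polynomial.X + Polynomial.X
    - Polynomial.C (Polynomial.C c) : Polynomial (Polynomial F))) C.card := by
  induction C using Finset.induction_on with
  | empty => simpa using TDB_one
  | @insert c s hc ih =>
      rw [Finset.prod_insert hc, Finset.card_insert_of_notMem hc]
      exact fun i j h => by have := (TDB_fac2 c).mul ih i j h; omega

lemma sliceP_prod (C : Finset F) : sliceP (∏ c ∈ C, (Polynomial.C Polynomial.X + Polynomial.X
    - Polynomial.C (Polynomial.C c) : Polynomial (Polynomial F))) C.card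
    = (1 + X) ^ C.card := by
  induction C using Finset.induction_on with
  | empty => simpa using sliceP_one
  | @insert c s hc ih =>
      rw [Finset.prod_insert hc, Finset.card_insert_of_notMem hc,
        (by omega : s.card + 1 = 1 + s.card), sliceP_mul (TDB_fac2 c) (TDB_prod s),
        sliceP_fac2, ih, add_comm 1 #s, pow_succ, mul_comm]

lemma TDB_ehPoly (C : Finset F) : TDB (ehPoly C) (1 + C.card) :=
  TDB_fac1.mul (TDB_prod C)

lemma sliceP_ehPoly (C : Finset F) :
    sliceP (ehPoly C) (1 + C.card) = (1 - X) * (1 + X) ^ C.card := by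
  rw [ehPoly, sliceP_mul TDB_fac1 (TDB_prod C), sliceP_fac1, sliceP_prod]

lemma coeff_ehPoly_top (C : Finset F) (i j : ℕ) (hj : 1 ≤ j) (hij : i + j = 1 + C.card) :
    ((ehPoly C).coeff j).coeff i = (C.card.choose j : F) - (C.card.choose (j - 1) : F) := by
  have h1 : ((ehPoly C).coeff j).coeff i = (sliceP (ehPoly C) (1 + C.card)).coeff j := by
    rw [sliceP_coeff, if_pos (by omega)]
    congr 1
    omega
  rw [h1, sliceP_ehPoly, sub_mul, one_mul, Polynomial.coeff_sub,
    Polynomial.coeff_one_add_X_pow]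
  congr 1
  obtain ⟨j', rfl⟩ : ∃ j', j = j' + 1 := ⟨j - 1, by omega⟩
  rw [Polynomial.coeff_X_mul, Polynomial.coeff_one_add_X_pow]
  simp

lemma eval_ehPoly (C : Finset F) (a b : F) :
    Polynomial.eval b ((ehPoly C).map (Polynomial.evalRingHom a))
      = (a - b) * ∏ c ∈ C, (a + b - c) := by
  simp [ehPoly, Polynomial.eval_map, Polynomial.eval₂_finset_prod]

theorem dias_da_silva_hamidoune (p : ℕ) (hp : p.Prime) (A : Finset (ZMod p))
    (hA : A.Nonempty) :
    min p (2 * A.card - 3) ≤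
      (((A ×ˢ A).filter (fun ab => ab.1 ≠ ab.2)).image
        (fun ab => ab.1 + ab.2)).card := by
  haveI : Fact p.Prime := ⟨hp⟩
  haveI : NeZero p := ⟨hp.pos.ne'⟩
  set S := (((A ×ˢ A).filter (fun ab => ab.1 ≠ ab.2)).image
      (fun ab => ab.1 + ab.2)) with hSdef
  have hmemS : ∀ (x a b : ZMod p), a ∈ A → b ∈ A → a ≠ b → a + b = x → x ∈ S := by
    intro x a b ha hb hne hsum
    rw [hSdef]
    apply Finset.mem_image.mpr
    exact ⟨(a, b), Finset.mem_filter.mpr ⟨Finset.mem_product.mpr ⟨ha, hb⟩, hne⟩, hsum⟩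
  have hkp : A.card ≤ p := by
    have := A.card_le_univ
    rwa [ZMod.card] at this
  by_cases hbig : p + 3 ≤ 2 * A.card
  · refine le_trans (min_le_left _ _) ?_
    have hp3 : 3 ≤ p := by omega
    have hSuniv : S = Finset.univ := by
      rw [Finset.eq_univ_iff_forall]
      intro c
      set T := A ∩ A.image (fun a => c - a) with hT
      have himg : (A.image (fun a => c - a)).card = A.card :=
        Finset.card_image_of_injective _ (fun x y h => by
          simpa using sub_right_injective h)
      have hTcard : 3 ≤ T.card := by
        have hu := Finset.card_union_add_card_inter A (A.image (fun a => c - a))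
        have hle : (A ∪ A.image (fun a => c - a)).card ≤ p := by
          have := (A ∪ A.image (fun a => c - a)).card_le_univ
          rwa [ZMod.card] at this
        show 3 ≤ (A ∩ A.image (fun a => c - a)).card
        omega
      have h2ne : (2 : ZMod p) ≠ 0 := by
        have : ((2 : ℕ) : ZMod p) ≠ 0 := by
          rw [Ne, ZMod.natCast_eq_zero_iff]
          intro hdvd
          have := Nat.le_of_dvd (by norm_num) hdvd
          omega
        simpa using this
      have hex : ∃ a ∈ T, a ≠ c - a := by
        by_contra hall
        push_neg at hall
        have : T.card ≤ 1 := by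
          apply Finset.card_le_one.mpr
          intro a ha b hb
          have h1 := hall a ha
          have h2 := hall b hb
          have : (2 : ZMod p) * a = 2 * b := by linear_combination h1 - h2
          exact mul_left_cancel₀ h2ne this
        omega
      obtain ⟨a, haT, hane⟩ := hex
      rw [hT, Finset.mem_inter] at haT
      obtain ⟨haA, haimg⟩ := haT
      obtain ⟨a', ha'A, ha'⟩ := Finset.mem_image.mp haimg
      have hcaA : c - a ∈ A := by
        have : c - a = a' := by rw [← ha']; ring
        rwa [this]
      exact hmemS c a (c - a) haA hcaA hane (by ring)
    rw [hSuniv, Finset.card_univ, ZMod.card]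
  · push_neg at hbig
    refine le_trans (min_le_right _ _) ?_
    by_cases hk2 : A.card ≤ 2
    · by_cases hk1 : A.card ≤ 1
      · have : 2 * A.card - 3 = 0 := by omega
        rw [this]; exact Nat.zero_le _
      · obtain ⟨a, ha, b, hb, hne⟩ := Finset.one_lt_card.mp (show 1 < A.card by omega)
        have : (a + b) ∈ S := hmemS _ a b ha hb hne rfl
        have hpos : 0 < S.card := Finset.card_pos.mpr ⟨a + b, this⟩
        exact le_trans (by omega : 2 * A.card - 3 ≤ 1) hpos
    · push_neg at hk2
      by_contra hcon
      push_neg at hcon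
      set m := 2 * A.card - 4 with hm
      have hScard : S.card ≤ m := by omega
      have hmp : m ≤ Fintype.card (ZMod p) := by rw [ZMod.card]; omega
      obtain ⟨C, hSC, _, hCcard⟩ := Finset.exists_subsuperset_card_eq S.subset_univ
        hScard (by rw [Finset.card_univ, ZMod.card]; omega)
      obtain ⟨a0, ha0⟩ := id hA
      set B := A.erase a0 with hBdef
      have hBcard : B.card = A.card - 1 := Finset.card_erase_of_mem ha0
      have hBne : B.Nonempty := Finset.card_pos.mp (by omega)
      have hvan : ∀ a ∈ A, ∀ b ∈ B,
          Polynomial.eval b ((ehPoly C).map (Polynomial.evalRingHom a)) = 0 := by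
        intro a ha b hb
        rw [eval_ehPoly]
        rcases eq_or_ne a b with rfl | hne
        · rw [sub_self, zero_mul]
        · have hbA : b ∈ A := Finset.mem_of_mem_erase hb
          have : a + b ∈ C := hSC (hmemS _ a b ha hbA hne rfl)
          rw [Finset.prod_eq_zero this (by ring), mul_zero]
      have hdeg : ∀ i j, (((ehPoly C).coeff j).coeff i ≠ 0) →
          i + j ≤ (A.card - 1) + (B.card - 1) := by
        intro i j h
        have := TDB_ehPoly C i j h
        omega
      have h0 := CN_two_var A B hA hBne (ehPoly C) hdeg hvan
      rw [coeff_ehPoly_top C _ _ (by omega) (by omega)] at h0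
      rw [sub_eq_zero] at h0
      -- h0 : (choose C.card (B.card-1) : ZMod p) = choose C.card (B.card-1-1)
      set m' := A.card - 2 with hm'
      have hj : B.card - 1 = m' := by omega
      have hCm : C.card = 2 * m' := by omega
      rw [hj, hCm] at h0
      have hid : Nat.choose (2 * m') m' * m' = Nat.choose (2 * m') (m' - 1) * (m' + 1) := by
        have := Nat.choose_succ_right_eq (2 * m') (m' - 1)
        have h1 : m' - 1 + 1 = m' := by omega
        have h2 : 2 * m' - (m' - 1) = m' + 1 := by omega
        rw [h1, h2] at this
        exact this
      have hzero : ((Nat.choose (2 * m') m' : ℕ) : ZMod p) = 0 := by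
        have hcast : ((Nat.choose (2 * m') m' * m' : ℕ) : ZMod p)
            = ((Nat.choose (2 * m') (m' - 1) * (m' + 1) : ℕ) : ZMod p) := by rw [hid]
        push_cast at hcast
        rw [← h0] at hcast
        have : ((Nat.choose (2 * m') m' : ℕ) : ZMod p) * ((m' : ZMod p) - ((m' : ZMod p) + 1)) = 0 := by
          ring_nf
          ring_nf at hcast
          linear_combination hcast
        have hne1 : ((m' : ZMod p) - ((m' : ZMod p) + 1)) ≠ 0 := by
          intro h
          have : (-1 : ZMod p) = 0 := by linear_combination h
          have := neg_eq_zero.mp this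
          exact one_ne_zero this
        exact (mul_eq_zero.mp this).resolve_right hne1
      rw [ZMod.natCast_eq_zero_iff] at hzero
      have hdvdfac : p ∣ Nat.factorial (2 * m') := by
        have := Nat.choose_mul_factorial_mul_factorial (by omega : m' ≤ 2 * m')
        have : p ∣ Nat.choose (2 * m') m' * Nat.factorial m' * Nat.factorial (2 * m' - m') :=
          Dvd.dvd.mul_right (Dvd.dvd.mul_right hzero _) _
        rwa [Nat.choose_mul_factorial_mul_factorial (by omega : m' ≤ 2 * m')] at this
      have := (Nat.Prime.dvd_factorial hp).mp hdvdfac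
      omega
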